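/- Let 𝒜 be a C*-algebra with the following property: every bounded ℝ-linear operator L on 𝒜_sa such that sup_{t ∈ ℝ} ‖exp(tL)‖ < ∞ and exp(tL) is completely positive for every t ∈ ℝ satisfies exp(tL) = id for all t ∈ ℝ. Then 𝒜 is commutative. -/

import Mathlib

open scoped ENNReal

variable {A : Type*} [NonUnitalCStarAlgebra A] [PartialOrder A] [StarOrderedRing A]

noncomputable instance : NormedSpace ℝ (selfAdjoint A) where
  norm_smul_le r x := norm_smul_le r (x : A)

instance : CompleteSpace (selfAdjoint A) :=
  (isClosed_eq continuous_star continuous_id).completeSpace_coe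

instance : IsTopologicalRing (selfAdjoint A →L[ℝ] selfAdjoint A) :=
  @NonUnitalSeminormedRing.toIsTopologicalRing (selfAdjoint A →L[ℝ] selfAdjoint A) _

/-- A bounded real-linear operator on the self-adjoint part of a C*-algebra is *positive*
if it maps the positive cone into itself. -/
def IsPositiveOp (L : selfAdjoint A →L[ℝ] selfAdjoint A) : Prop :=
  ∀ x : selfAdjoint A, 0 ≤ x → 0 ≤ L x

/-- `L` is *quasi-positive* if `L + α • id` is positive for some `α ≥ 0`. -/
def IsQuasiPositiveOp (L : selfAdjoint A →L[ℝ] selfAdjoint A) : Prop :=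
  ∃ α : ℝ, 0 ≤ α ∧ IsPositiveOp (L + α • ContinuousLinearMap.id ℝ (selfAdjoint A))

/-- `L` is *exponentially positive* if `exp (t • L)` is positive for all `t ≥ 0`. -/
def IsExpPositiveOp (L : selfAdjoint A →L[ℝ] selfAdjoint A) : Prop :=
  ∀ t : ℝ, 0 ≤ t → IsPositiveOp (NormedSpace.exp (t • L))

/-- `L` is *cross positive* if `φ (L x) ≥ 0` whenever `x ≥ 0` and `φ` is a positive bounded
functional with `φ x = 0`. -/
def IsCrossPositiveOp (L : selfAdjoint A →L[ℝ] selfAdjoint A) : Prop :=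
  ∀ (x : selfAdjoint A) (φ : selfAdjoint A →L[ℝ] ℝ), 0 ≤ x →
    (∀ y : selfAdjoint A, 0 ≤ y → 0 ≤ φ y) → φ x = 0 → 0 ≤ φ (L x)

/-- An element of the C*-algebra of `k × k` matrices over `A` is positive if and only if it is
of the form `star x * x`. -/
def MatrixIsPositive {k : ℕ} (m : Matrix (Fin k) (Fin k) A) : Prop :=
  ∃ x : Matrix (Fin k) (Fin k) A, m = star x * x

/-- A bounded complex-linear operator `T` on `A` is *completely positive* if, for every `k`,
applying `T` entrywise to `k × k` matrices over `A` maps positive matrices to positive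
matrices. -/
def IsCompletelyPositiveC (T : A →L[ℂ] A) : Prop :=
  ∀ (k : ℕ) (m : Matrix (Fin k) (Fin k) A), MatrixIsPositive m → MatrixIsPositive (m.map T)

/-- `T : A →L[ℂ] A` extends the operator `L` on the self-adjoint part of `A`.  (Such an
extension is unique since `A = A_sa ⊕ i A_sa`.) -/
def ExtendsOp (L : selfAdjoint A →L[ℝ] selfAdjoint A) (T : A →L[ℂ] A) : Prop :=
  ∀ x : selfAdjoint A, T x = L x

/-- A bounded real-linear operator on the self-adjoint part of `A` is *completely positive*
if its (unique) bounded complex-linear extension to `A` is completely positive. -/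
def IsCompletelyPositiveOp (L : selfAdjoint A →L[ℝ] selfAdjoint A) : Prop :=
  ∃ T : A →L[ℂ] A, ExtendsOp L T ∧ IsCompletelyPositiveC T

/-- `L` is *power bounded* if `sup_n ‖L ^ n‖ < ∞`. -/
def PowerBounded (L : selfAdjoint A →L[ℝ] selfAdjoint A) : Prop :=
  ∃ C : ℝ, ∀ n : ℕ, ‖L ^ n‖ ≤ C

/-- A subset `S ⊆ ℂ` is *cyclic* if `r * exp (i θ) ∈ S` (with `r ≥ 0`, `θ ∈ ℝ`) implies
`r * exp (i n θ) ∈ S` for every integer `n`. -/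
def IsCyclicSet (S : Set ℂ) : Prop :=
  ∀ (r θ : ℝ), 0 ≤ r → (r : ℂ) * Complex.exp ((θ : ℂ) * Complex.I) ∈ S →
    ∀ n : ℤ, (r : ℂ) * Complex.exp ((n : ℂ) * (θ : ℂ) * Complex.I) ∈ S

section Auxiliary

set_option linter.unusedSectionVars false

lemma norm_sa (x : selfAdjoint A) : ‖x‖ = ‖(x : A)‖ := rfl

lemma norm_realPart_le (a : A) : ‖(realPart a : A)‖ ≤ ‖a‖ := by
  rw [realPart_apply_coe]
  calc ‖(2:ℝ)⁻¹ • (a + star a)‖ = (2:ℝ)⁻¹ * ‖a + star a‖ := by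
        rw [norm_smul]; norm_num
    _ ≤ (2:ℝ)⁻¹ * (‖a‖ + ‖star a‖) := by
        gcongr; exact norm_add_le _ _
    _ = ‖a‖ := by rw [norm_star]; ring

lemma norm_imaginaryPart_le (a : A) : ‖(imaginaryPart a : A)‖ ≤ ‖a‖ := by
  rw [imaginaryPart_apply_coe]
  calc ‖-Complex.I • (2:ℝ)⁻¹ • (a - star a)‖ = ‖(2:ℝ)⁻¹ • (a - star a)‖ := by
        rw [norm_smul]; simp
    _ = (2:ℝ)⁻¹ * ‖a - star a‖ := by rw [norm_smul]; norm_num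
    _ ≤ (2:ℝ)⁻¹ * (‖a‖ + ‖star a‖) := by gcongr; exact norm_sub_le _ _
    _ = ‖a‖ := by rw [norm_star]; ring

/-- The canonical real-linear extension of an operator on `selfAdjoint A` to `A`. -/
noncomputable def phiFun (T : selfAdjoint A →L[ℝ] selfAdjoint A) : A →L[ℝ] A :=
  LinearMap.mkContinuous
    { toFun := fun a => (T (realPart a) : A) + Complex.I • (T (imaginaryPart a) : A)
      map_add' := fun a b => by
        simp only [map_add, AddSubgroup.coe_add, smul_add]
        abel
      map_smul' := fun r a => by
        simp only [map_smul, RingHom.id_apply, selfAdjoint.val_smul, smul_add]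
        rw [smul_comm r Complex.I] }
    (2 * ‖T‖) (fun a => by
      calc ‖(T (realPart a) : A) + Complex.I • (T (imaginaryPart a) : A)‖
          ≤ ‖(T (realPart a) : A)‖ + ‖Complex.I • (T (imaginaryPart a) : A)‖ :=
            norm_add_le _ _
        _ = ‖T (realPart a)‖ + ‖T (imaginaryPart a)‖ := by
            rw [norm_smul]; simp [norm_sa]
        _ ≤ ‖T‖ * ‖realPart a‖ + ‖T‖ * ‖imaginaryPart a‖ := by
            gcongr <;> exact T.le_opNorm _
        _ ≤ ‖T‖ * ‖a‖ + ‖T‖ * ‖a‖ := by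
            gcongr
            · exact norm_realPart_le a
            · exact norm_imaginaryPart_le a
        _ = 2 * ‖T‖ * ‖a‖ := by ring)

lemma phiFun_apply (T : selfAdjoint A →L[ℝ] selfAdjoint A) (a : A) :
    phiFun T a = (T (realPart a) : A) + Complex.I • (T (imaginaryPart a) : A) := rfl

lemma phiFun_coe (T : selfAdjoint A →L[ℝ] selfAdjoint A) (x : selfAdjoint A) :
    phiFun T (x : A) = (T x : A) := by
  rw [phiFun_apply]
  rw [show realPart (x : A) = x from Subtype.ext x.property.coe_realPart,
    x.property.imaginaryPart]
  simp

lemma phiFun_I_smul (T : selfAdjoint A →L[ℝ] selfAdjoint A) (a : A) :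
    phiFun T (Complex.I • a) = Complex.I • phiFun T a := by
  rw [phiFun_apply, phiFun_apply, realPart_I_smul, imaginaryPart_I_smul]
  simp only [map_neg, NegMemClass.coe_neg, smul_add, smul_smul, Complex.I_mul_I,
    neg_one_smul, smul_neg]
  abel

lemma phiFun_norm_le (T : selfAdjoint A →L[ℝ] selfAdjoint A) : ‖phiFun T‖ ≤ 2 * ‖T‖ :=
  LinearMap.mkContinuous_norm_le _ (by positivity) _

/-- `phiFun` as a ring homomorphism. -/
noncomputable def phi :
    (selfAdjoint A →L[ℝ] selfAdjoint A) →+* (A →L[ℝ] A) where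
  toFun := phiFun
  map_one' := by
    ext a
    simp only [phiFun_apply, ContinuousLinearMap.one_apply]
    exact realPart_add_I_smul_imaginaryPart a
  map_mul' T S := by
    ext a
    rw [ContinuousLinearMap.mul_apply, phiFun_apply S a, map_add, phiFun_coe,
      phiFun_I_smul, phiFun_coe, phiFun_apply]
    simp [ContinuousLinearMap.mul_apply]
  map_zero' := by ext a; simp [phiFun_apply]
  map_add' T S := by
    ext a
    simp only [phiFun_apply, ContinuousLinearMap.add_apply]
    push_cast
    simp only [smul_add]
    abel

lemma phi_apply (T : selfAdjoint A →L[ℝ] selfAdjoint A) (a : A) :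
    phi T a = (T (realPart a) : A) + Complex.I • (T (imaginaryPart a) : A) := rfl

lemma phi_coe (T : selfAdjoint A →L[ℝ] selfAdjoint A) (x : selfAdjoint A) :
    phi T (x : A) = (T x : A) := phiFun_coe T x

lemma phi_continuous :
    Continuous (phi : (selfAdjoint A →L[ℝ] selfAdjoint A) →+* (A →L[ℝ] A)) :=
  AddMonoidHomClass.continuous_of_bound (phi (A := A)) 2 fun T => by
    exact phiFun_norm_le T

lemma phi_smul (t : ℝ) (T : selfAdjoint A →L[ℝ] selfAdjoint A) :
    phi (t • T) = t • (phi T : A →L[ℝ] A) := by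
  ext a
  simp only [phi_apply, ContinuousLinearMap.smul_apply, selfAdjoint.val_smul, smul_add,
    smul_comm t Complex.I]

lemma phi_exp (T : selfAdjoint A →L[ℝ] selfAdjoint A) :
    phi (NormedSpace.exp T) = NormedSpace.exp (phi T) := by
  let +nondep : NormedAlgebra ℚ (selfAdjoint A →L[ℝ] selfAdjoint A) := .restrictScalars ℚ ℝ _
  let +nondep : NormedAlgebra ℚ (A →L[ℝ] A) := .restrictScalars ℚ ℝ _
  exact NormedSpace.map_exp phi phi_continuous T

lemma inr_snd_eq {p : Unitization ℂ A} (h : p.fst = 0) : ((p.snd : Unitization ℂ A)) = p :=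
  Unitization.ext (by simp [h]) (by simp)

lemma norm_snd_of_fst_eq_zero {p : Unitization ℂ A} (h : p.fst = 0) : ‖p.snd‖ = ‖p‖ := by
  conv_rhs => rw [← inr_snd_eq h]
  rw [Unitization.norm_inr]

lemma snd_mul_of_fst_eq_zero {p q : Unitization ℂ A} (hp : p.fst = 0) (hq : q.fst = 0) :
    (p * q).snd = p.snd * q.snd := by
  rw [Unitization.snd_mul, hp, hq]; simp

end Auxiliary


section Auxiliary2

set_option linter.unusedSectionVars false
set_option synthInstance.maxHeartbeats 1000000
set_option maxHeartbeats 1000000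

open MulOpposite

/-- Left multiplication by an element of the unitization, as an operator on `A`. -/
noncomputable def lmulOp (u : Unitization ℂ A) : A →L[ℝ] A :=
  LinearMap.mkContinuous
    { toFun := fun a => (u * (a : Unitization ℂ A)).snd
      map_add' := fun a b => by
        simp only [Unitization.inr_add, mul_add, Unitization.snd_add]
      map_smul' := fun r a => by
        simp only [RingHom.id_apply, Unitization.inr_smul, mul_smul_comm,
          Unitization.snd_smul] }
    ‖u‖ (fun a => by
      simp only [LinearMap.coe_mk, AddHom.coe_mk]
      rw [norm_snd_of_fst_eq_zero (by simp : (u * (a : Unitization ℂ A)).fst = 0)]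
      calc ‖u * (a : Unitization ℂ A)‖ ≤ ‖u‖ * ‖(a : Unitization ℂ A)‖ := norm_mul_le _ _
        _ = ‖u‖ * ‖a‖ := by rw [Unitization.norm_inr])

lemma lmulOp_apply (u : Unitization ℂ A) (a : A) :
    lmulOp u a = (u * (a : Unitization ℂ A)).snd := rfl

lemma lmulOp_norm_le (u : Unitization ℂ A) : ‖lmulOp u‖ ≤ ‖u‖ :=
  ContinuousLinearMap.opNorm_le_bound _ (norm_nonneg u) fun a => by
    rw [lmulOp_apply,
      norm_snd_of_fst_eq_zero (by simp : (u * (a : Unitization ℂ A)).fst = 0)]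
    calc ‖u * (a : Unitization ℂ A)‖ ≤ ‖u‖ * ‖(a : Unitization ℂ A)‖ := norm_mul_le _ _
      _ = ‖u‖ * ‖a‖ := by rw [Unitization.norm_inr]

/-- Right multiplication by an element of the unitization, as an operator on `A`. -/
noncomputable def rmulOp (u : Unitization ℂ A) : A →L[ℝ] A :=
  LinearMap.mkContinuous
    { toFun := fun a => ((a : Unitization ℂ A) * u).snd
      map_add' := fun a b => by
        simp only [Unitization.inr_add, add_mul, Unitization.snd_add]
      map_smul' := fun r a => by
        simp only [RingHom.id_apply, Unitization.inr_smul, smul_mul_assoc,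
          Unitization.snd_smul] }
    ‖u‖ (fun a => by
      simp only [LinearMap.coe_mk, AddHom.coe_mk]
      rw [norm_snd_of_fst_eq_zero (by simp : ((a : Unitization ℂ A) * u).fst = 0)]
      calc ‖(a : Unitization ℂ A) * u‖ ≤ ‖(a : Unitization ℂ A)‖ * ‖u‖ := norm_mul_le _ _
        _ = ‖u‖ * ‖a‖ := by rw [Unitization.norm_inr, mul_comm])

lemma rmulOp_apply (u : Unitization ℂ A) (a : A) :
    rmulOp u a = ((a : Unitization ℂ A) * u).snd := rfl

lemma rmulOp_norm_le (u : Unitization ℂ A) : ‖rmulOp u‖ ≤ ‖u‖ :=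
  ContinuousLinearMap.opNorm_le_bound _ (norm_nonneg u) fun a => by
    rw [rmulOp_apply,
      norm_snd_of_fst_eq_zero (by simp : ((a : Unitization ℂ A) * u).fst = 0)]
    calc ‖(a : Unitization ℂ A) * u‖ ≤ ‖(a : Unitization ℂ A)‖ * ‖u‖ := norm_mul_le _ _
      _ = ‖u‖ * ‖a‖ := by rw [Unitization.norm_inr, mul_comm]

/-- `lmulOp` as a ring homomorphism. -/
noncomputable def lmul' : Unitization ℂ A →+* (A →L[ℝ] A) where
  toFun := lmulOp
  map_one' := by ext a; simp [lmulOp_apply]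
  map_mul' u v := by
    ext a
    simp only [ContinuousLinearMap.mul_apply, lmulOp_apply]
    rw [inr_snd_eq (by simp : (v * (a : Unitization ℂ A)).fst = 0), mul_assoc]
  map_zero' := by ext a; simp [lmulOp_apply]
  map_add' u v := by ext a; simp [lmulOp_apply, add_mul]

/-- `rmulOp` as a ring homomorphism from the multiplicative opposite. -/
noncomputable def rmul' : (Unitization ℂ A)ᵐᵒᵖ →+* (A →L[ℝ] A) where
  toFun u := rmulOp u.unop
  map_one' := by ext a; simp [rmulOp_apply]
  map_mul' u v := by
    ext a
    simp only [ContinuousLinearMap.mul_apply, rmulOp_apply, unop_mul]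
    rw [inr_snd_eq (by simp : ((a : Unitization ℂ A) * v.unop).fst = 0), mul_assoc]
  map_zero' := by ext a; simp [rmulOp_apply]
  map_add' u v := by ext a; simp [rmulOp_apply, mul_add]

lemma lmul'_apply (u : Unitization ℂ A) (a : A) :
    lmul' u a = (u * (a : Unitization ℂ A)).snd := rfl

lemma rmul'_apply (u : (Unitization ℂ A)ᵐᵒᵖ) (a : A) :
    rmul' u a = ((a : Unitization ℂ A) * u.unop).snd := rfl

lemma lmul'_continuous :
    Continuous (lmul' : Unitization ℂ A →+* (A →L[ℝ] A)) :=
  AddMonoidHomClass.continuous_of_bound lmul' 1 fun u => by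
    rw [one_mul]; exact lmulOp_norm_le u

lemma rmul'_continuous :
    Continuous (rmul' : (Unitization ℂ A)ᵐᵒᵖ →+* (A →L[ℝ] A)) :=
  AddMonoidHomClass.continuous_of_bound rmul' 1 fun u => by
    rw [one_mul]
    calc ‖rmulOp u.unop‖ ≤ ‖u.unop‖ := rmulOp_norm_le u.unop
      _ = ‖u‖ := norm_unop u

lemma lmul'_rmul'_commute (u v : Unitization ℂ A) :
    Commute (lmul' u) (rmul' (op v) : A →L[ℝ] A) := by
  ext a
  simp only [ContinuousLinearMap.mul_apply, lmul'_apply, rmul'_apply, unop_op]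
  rw [inr_snd_eq (by simp : ((a : Unitization ℂ A) * v).fst = 0),
    inr_snd_eq (by simp : (u * (a : Unitization ℂ A)).fst = 0), mul_assoc]

lemma exp_conj_apply (w : Unitization ℂ A) (a : A) :
    NormedSpace.exp (lmul' w + rmul' (op (-w)) : A →L[ℝ] A) a
      = (NormedSpace.exp w * (a : Unitization ℂ A) * NormedSpace.exp (-w)).snd := by
  let +nondep : NormedAlgebra ℚ (Unitization ℂ A) := .restrictScalars ℚ ℝ _
  let +nondep : NormedAlgebra ℚ (A →L[ℝ] A) := .restrictScalars ℚ ℝ _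
  have h1 : NormedSpace.exp ((lmul' : Unitization ℂ A →+* (A →L[ℝ] A)) w)
      = lmul' (NormedSpace.exp w) :=
    (NormedSpace.map_exp (lmul' : Unitization ℂ A →+* (A →L[ℝ] A))
      lmul'_continuous w).symm
  have h2 : NormedSpace.exp ((rmul' : (Unitization ℂ A)ᵐᵒᵖ →+* (A →L[ℝ] A)) (op (-w)))
      = rmul' (op (NormedSpace.exp (-w))) := by
    rw [(NormedSpace.map_exp (rmul' : (Unitization ℂ A)ᵐᵒᵖ →+* (A →L[ℝ] A))
      rmul'_continuous (op (-w))).symm, NormedSpace.exp_op]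
  rw [NormedSpace.exp_add_of_commute (lmul'_rmul'_commute w (-w)), h1, h2]
  simp only [ContinuousLinearMap.mul_apply, lmul'_apply, rmul'_apply, unop_op]
  rw [inr_snd_eq (by simp : ((a : Unitization ℂ A) * NormedSpace.exp (-w)).fst = 0),
    mul_assoc]

end Auxiliary2


section Auxiliary3

set_option linter.unusedSectionVars false
set_option synthInstance.maxHeartbeats 1000000
set_option maxHeartbeats 1000000

open MulOpposite

/-- The commutator map `x ↦ i[h, x]` on the self-adjoint part of `A`. -/
noncomputable def commL (h : selfAdjoint A) : selfAdjoint A →L[ℝ] selfAdjoint A :=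
  LinearMap.mkContinuous
    { toFun := fun x => ⟨Complex.I • ((h : A) * (x : A) - (x : A) * (h : A)), by
        have hst : star ((h : A) * (x : A) - (x : A) * (h : A))
            = -((h : A) * (x : A) - (x : A) * (h : A)) := by
          rw [star_sub, star_mul, star_mul, h.property.star_eq, x.property.star_eq, neg_sub]
        rw [selfAdjoint.mem_iff, star_smul, hst, Complex.star_def, Complex.conj_I,
          neg_smul, smul_neg, neg_neg]⟩
      map_add' := fun x y => by
        ext
        simp only [AddSubgroup.coe_add, mul_add, add_mul, smul_add]
        rw [show (h:A) * (x:A) + (h:A) * (y:A) - ((x:A) * (h:A) + (y:A) * (h:A))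
            = ((h:A) * (x:A) - (x:A) * (h:A)) + ((h:A) * (y:A) - (y:A) * (h:A)) by abel,
          smul_add]
      map_smul' := fun r x => by
        ext
        simp only [RingHom.id_apply, selfAdjoint.val_smul, mul_smul_comm, smul_mul_assoc,
          ← smul_sub, smul_comm r Complex.I] }
    (2 * ‖h‖) (fun x => by
      simp only [LinearMap.coe_mk, AddHom.coe_mk, norm_sa]
      calc ‖Complex.I • ((h : A) * (x : A) - (x : A) * (h : A))‖
          = ‖(h : A) * (x : A) - (x : A) * (h : A)‖ := by
            rw [norm_smul, Complex.norm_I, one_mul]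
        _ ≤ ‖(h : A) * (x : A)‖ + ‖(x : A) * (h : A)‖ := norm_sub_le _ _
        _ ≤ ‖(h : A)‖ * ‖(x : A)‖ + ‖(x : A)‖ * ‖(h : A)‖ := by
            gcongr <;> exact norm_mul_le _ _
        _ = 2 * ‖h‖ * ‖x‖ := by simp only [norm_sa]; ring)

lemma commL_apply_coe (h x : selfAdjoint A) :
    (commL h x : A) = Complex.I • ((h : A) * (x : A) - (x : A) * (h : A)) := rfl

lemma commL_smul (t : ℝ) (h : selfAdjoint A) : commL (t • h) = t • commL h := by
  ext x
  simp only [commL_apply_coe, ContinuousLinearMap.smul_apply, selfAdjoint.val_smul,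
    smul_mul_assoc, mul_smul_comm, ← smul_sub, smul_comm t Complex.I]

lemma phi_commL (h : selfAdjoint A) :
    phi (commL h) = lmul' (Complex.I • (((h : A) : Unitization ℂ A)))
      + rmul' (op (-(Complex.I • (((h : A) : Unitization ℂ A))))) := by
  ext a
  rw [ContinuousLinearMap.add_apply, lmul'_apply, rmul'_apply, unop_op]
  have hr : ((Complex.I • (((h : A) : Unitization ℂ A))) * (a : Unitization ℂ A)).snd
      = Complex.I • ((h : A) * a) := by
    rw [smul_mul_assoc, ← Unitization.inr_mul, ← Unitization.inr_smul, Unitization.snd_inr]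
  have hl : ((a : Unitization ℂ A) * -(Complex.I • (((h : A) : Unitization ℂ A)))).snd
      = -(Complex.I • (a * (h : A))) := by
    rw [mul_neg, mul_smul_comm, ← Unitization.inr_mul, ← Unitization.inr_smul,
      ← Unitization.inr_neg, Unitization.snd_inr]
  rw [hr, hl, phi_apply, commL_apply_coe, commL_apply_coe]
  conv_rhs => rw [← realPart_add_I_smul_imaginaryPart a]
  simp only [mul_add, add_mul, mul_smul_comm, smul_mul_assoc, smul_sub, smul_add,
    smul_smul, Complex.I_mul_I, neg_one_smul, smul_neg, neg_sub]
  abel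

lemma exp_commL_coe (g : selfAdjoint A) (x : selfAdjoint A) :
    ((NormedSpace.exp (commL g) x : selfAdjoint A) : A)
      = (NormedSpace.exp (Complex.I • (((g : A) : Unitization ℂ A)))
          * ((x : A) : Unitization ℂ A)
          * NormedSpace.exp (-(Complex.I • (((g : A) : Unitization ℂ A))))).snd := by
  rw [← phi_coe, phi_exp, phi_commL, exp_conj_apply]

lemma star_wU (g : selfAdjoint A) :
    star (Complex.I • (((g : A) : Unitization ℂ A)))
      = -(Complex.I • (((g : A) : Unitization ℂ A))) := by
  rw [star_smul, ← Unitization.inr_star, g.property.star_eq, Complex.star_def,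
    Complex.conj_I, neg_smul]

instance : Nontrivial (Unitization ℂ A) :=
  nontrivial_of_ne 1 0 fun hc => by simpa using congrArg (fun p : Unitization ℂ A => p.fst) hc

lemma exp_wU_unitary (g : selfAdjoint A) :
    NormedSpace.exp (Complex.I • (((g : A) : Unitization ℂ A))) ∈
      unitary (Unitization ℂ A) := by
  set w := Complex.I • (((g : A) : Unitization ℂ A)) with hw
  let +nondep : NormedAlgebra ℚ (Unitization ℂ A) := .restrictScalars ℚ ℝ _
  have hstar : star (NormedSpace.exp w) = NormedSpace.exp (-w) := by
    rw [NormedSpace.star_exp, star_wU]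
  have h1 : NormedSpace.exp (-w) * NormedSpace.exp w = 1 := by
    rw [← NormedSpace.exp_add_of_commute (Commute.refl w).neg_left, neg_add_cancel,
      NormedSpace.exp_zero]
  have h2 : NormedSpace.exp w * NormedSpace.exp (-w) = 1 := by
    rw [← NormedSpace.exp_add_of_commute (Commute.refl w).neg_right, add_neg_cancel,
      NormedSpace.exp_zero]
  exact Unitary.mem_iff.mpr ⟨by rw [hstar]; exact h1, by rw [hstar]; exact h2⟩

lemma norm_exp_wU (g : selfAdjoint A) :
    ‖NormedSpace.exp (Complex.I • (((g : A) : Unitization ℂ A)))‖ = 1 :=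
  CStarRing.norm_coe_unitary (⟨_, exp_wU_unitary g⟩ : unitary (Unitization ℂ A))

lemma norm_exp_wU_neg (g : selfAdjoint A) :
    ‖NormedSpace.exp (-(Complex.I • (((g : A) : Unitization ℂ A))))‖ = 1 := by
  rw [← star_wU, ← NormedSpace.star_exp, norm_star]
  exact norm_exp_wU g

lemma norm_exp_commL_le (h : selfAdjoint A) (t : ℝ) :
    ‖NormedSpace.exp (t • commL h)‖ ≤ 1 := by
  rw [← commL_smul]
  refine ContinuousLinearMap.opNorm_le_bound _ zero_le_one fun x => by
    rw [one_mul, norm_sa, norm_sa, exp_commL_coe]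
    set u := NormedSpace.exp (Complex.I • ((((t • h : selfAdjoint A) : A) : Unitization ℂ A)))
    set v := NormedSpace.exp (-(Complex.I • ((((t • h : selfAdjoint A) : A) : Unitization ℂ A))))
    rw [norm_snd_of_fst_eq_zero (by simp : (u * ((x : A) : Unitization ℂ A) * v).fst = 0)]
    calc ‖u * ((x : A) : Unitization ℂ A) * v‖
        ≤ ‖u * ((x : A) : Unitization ℂ A)‖ * ‖v‖ := norm_mul_le _ _
      _ ≤ ‖u‖ * ‖((x : A) : Unitization ℂ A)‖ * ‖v‖ := by gcongr; exact norm_mul_le _ _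
      _ = ‖(x : A)‖ := by
          rw [norm_exp_wU (t • h), norm_exp_wU_neg (t • h), Unitization.norm_inr,
            one_mul, mul_one]

end Auxiliary3


section Auxiliary4

set_option linter.unusedSectionVars false
set_option synthInstance.maxHeartbeats 1000000
set_option maxHeartbeats 1000000

open MulOpposite

/-- Conjugation `a ↦ u a u*` by an element of the unitization, as a `ℂ`-linear operator. -/
noncomputable def conjOp (u : Unitization ℂ A) : A →L[ℂ] A :=
  LinearMap.mkContinuous
    { toFun := fun a => (u * (a : Unitization ℂ A) * star u).snd
      map_add' := fun a b => by
        simp only [Unitization.inr_add, mul_add, add_mul, Unitization.snd_add]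
      map_smul' := fun z a => by
        simp only [RingHom.id_apply, Unitization.inr_smul, mul_smul_comm, smul_mul_assoc,
          Unitization.snd_smul] }
    (‖u‖ * ‖u‖) (fun a => by
      simp only [LinearMap.coe_mk, AddHom.coe_mk]
      rw [norm_snd_of_fst_eq_zero
        (by simp : (u * (a : Unitization ℂ A) * star u).fst = 0)]
      calc ‖u * (a : Unitization ℂ A) * star u‖
          ≤ ‖u * (a : Unitization ℂ A)‖ * ‖star u‖ := norm_mul_le _ _
        _ ≤ ‖u‖ * ‖(a : Unitization ℂ A)‖ * ‖star u‖ := by gcongr; exact norm_mul_le _ _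
        _ = ‖u‖ * ‖u‖ * ‖a‖ := by rw [Unitization.norm_inr, norm_star]; ring)

lemma conjOp_apply (u : Unitization ℂ A) (a : A) :
    conjOp u a = (u * (a : Unitization ℂ A) * star u).snd := rfl

lemma conjOp_term (u : Unitization ℂ A) (b c : A) :
    conjOp u (star b * c)
      = star (((b : Unitization ℂ A) * star u).snd) * (((c : Unitization ℂ A) * star u).snd) := by
  rw [conjOp_apply, ← Unitization.snd_star,
    ← snd_mul_of_fst_eq_zero (by simp) (by simp), star_mul, star_star,
    Unitization.inr_mul, ← Unitization.inr_star]
  simp only [mul_assoc]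

lemma conjOp_isCompletelyPositive (u : Unitization ℂ A) :
    IsCompletelyPositiveC (conjOp u) := by
  rintro k m ⟨x, rfl⟩
  refine ⟨fun i j => (((x i j : A) : Unitization ℂ A) * star u).snd, ?_⟩
  ext i j
  simp only [Matrix.map_apply, Matrix.mul_apply]
  rw [map_sum (conjOp u)]
  refine Finset.sum_congr rfl fun l _ => ?_
  show _ = star ((((x l i : A) : Unitization ℂ A) * star u).snd) * ((((x l j : A) : Unitization ℂ A) * star u).snd)
  exact conjOp_term u (x l i) (x l j)

lemma exp_commL_isCP (h : selfAdjoint A) (t : ℝ) :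
    IsCompletelyPositiveOp (NormedSpace.exp (t • commL h)) := by
  refine ⟨conjOp (NormedSpace.exp
      (Complex.I • ((((t • h : selfAdjoint A) : A) : Unitization ℂ A)))), ?_,
    conjOp_isCompletelyPositive _⟩
  intro x
  rw [conjOp_apply, ← commL_smul, exp_commL_coe]
  congr 1
  rw [NormedSpace.star_exp, star_wU]

end Auxiliary4


/-- If every bounded, completely positive one-parameter group `(exp (t • L))_{t ∈ ℝ}` on the
self-adjoint part of a C*-algebra `A` is trivial, then `A` is commutative. -/
theorem commutative_of_bounded_completelyPositive_group_trivial
    (htriv : ∀ L : selfAdjoint A →L[ℝ] selfAdjoint A,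
      (∃ C : ℝ, ∀ t : ℝ, ‖NormedSpace.exp (t • L)‖ ≤ C) →
      (∀ t : ℝ, IsCompletelyPositiveOp (NormedSpace.exp (t • L))) →
      ∀ t : ℝ, NormedSpace.exp (t • L) = ContinuousLinearMap.id ℝ (selfAdjoint A)) :
    ∀ a b : A, a * b = b * a := by
  have hcomm : ∀ h x : selfAdjoint A, (h : A) * (x : A) = (x : A) * (h : A) := by
    intro h x
    have hid := htriv (commL h) ⟨1, norm_exp_commL_le h⟩ (exp_commL_isCP h)
    have h1 : HasDerivAt (fun t : ℝ => NormedSpace.exp (t • commL h)) (commL h) 0 := by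
      have := hasDerivAt_exp_smul_const (𝕂 := ℝ) (commL h) (0 : ℝ)
      have e : NormedSpace.exp ((0 : ℝ) • commL h) * commL h = commL h := by
        rw [hid 0]; exact one_mul _
      exact this.congr_deriv e
    rw [funext hid] at h1
    have h2 : commL h = 0 := by
      have := h1.unique (hasDerivAt_const (0 : ℝ) (ContinuousLinearMap.id ℝ (selfAdjoint A)))
      simpa using this
    have h3 : (commL h x : A) = 0 := by rw [h2]; simp
    rw [commL_apply_coe] at h3
    have h4 : (h : A) * (x : A) - (x : A) * (h : A) = 0 := by
      have h5 := congrArg (fun c => (-Complex.I) • c) h3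
      simpa [smul_smul, neg_mul, Complex.I_mul_I] using h5
    exact sub_eq_zero.mp h4
  intro a b
  rw [← realPart_add_I_smul_imaginaryPart a, ← realPart_add_I_smul_imaginaryPart b]
  simp only [mul_add, add_mul, mul_smul_comm, smul_mul_assoc, smul_smul, smul_add]
  rw [hcomm (realPart a) (realPart b), hcomm (realPart a) (imaginaryPart b),
    hcomm (imaginaryPart a) (realPart b), hcomm (imaginaryPart a) (imaginaryPart b)]
  abel
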